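/- arXiv:0710.2070 — 2 statements merged into one kernel-verified Lean document; each statement's English description precedes it below -/
import Mathlib

section
/- Let R be a commutative ring, let (N, d_N) and (M, d_M) be differential R-modules, let π : N → M and ∇ : M → N be chain maps, and let h : N → N be an R-linear map such that π ∘ ∇ = id_M and d_N ∘ h + h ∘ d_N = id_N − ∇ ∘ π (the side conditions π ∘ h = 0, h ∘ ∇ = 0, h ∘ h = 0 are NOT assumed). Write p = id_N − ∇ ∘ π and define h̃ = p ∘ h ∘ p ∘ d_N ∘ p ∘ h ∘ p. Then h̃ satisfies: d_N ∘ h̃ + h̃ ∘ d_N = id_N − ∇ ∘ π, π ∘ h̃ = 0, h̃ ∘ ∇ = 0, and h̃ ∘ h̃ = 0. In other words, the side conditions of a contraction can always be achieved by replacing h with h̃. -/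
theorem ring_aux {A : Type*} [Ring A] (d h e : A)
    (hd : d * d = 0) (he : e * e = e) (hde : d * e = e * d)
    (hh : d * h + h * d = 1 - e) :
    let P : A := 1 - e
    let Q : A := P * h * P
    let H : A := Q * d * Q
    (d * H + H * d = 1 - e) ∧ H * H = 0 := by
  intro P Q H
  have hPdef : P = 1 - e := rfl
  have hQdef : Q = P * h * P := rfl
  have hHdef : H = Q * d * Q := rfl
  clear_value P Q H
  have hPP : P * P = P := by
    rw [hPdef, mul_sub, mul_one, sub_mul, one_mul, he]; abel
  have hdP : d * P = P * d := by
    rw [hPdef, mul_sub, sub_mul, mul_one, one_mul, hde]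
  have hdh : d * h = P - h * d := by rw [hPdef]; exact eq_sub_of_add_eq hh
  have hdhd : d * h * d = P * d := by
    rw [hdh, sub_mul, mul_assoc, hd, mul_zero, sub_zero]
  have hPQ : P * Q = Q := by rw [hQdef, ← mul_assoc, ← mul_assoc, hPP]
  have hQP : Q * P = Q := by rw [hQdef, mul_assoc, hPP]
  have hPdP : P * (d * P) = P * d := by rw [hdP, ← mul_assoc, hPP]
  have hdQd : d * Q * d = P * d := by
    calc d * Q * d = (d * P) * h * (P * d) := by rw [hQdef]; noncomm_ring
    _ = (P * d) * h * (P * d) := by rw [hdP]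
    _ = P * (d * h * d) * P := by nth_rewrite 2 [← hdP]; noncomm_ring
    _ = P * (P * d) * P := by rw [hdhd]
    _ = P * d := by rw [← mul_assoc, hPP, mul_assoc, hPdP]
  constructor
  · have t1 : d * H = d * Q := by
      calc d * H = (d * Q * d) * Q := by rw [hHdef]; noncomm_ring
      _ = (P * d) * Q := by rw [hdQd]
      _ = d * Q := by rw [← hdP, mul_assoc, hPQ]
    have t2 : H * d = Q * d := by
      calc H * d = Q * (d * Q * d) := by rw [hHdef]; noncomm_ring
      _ = Q * (P * d) := by rw [hdQd]
      _ = Q * d := by rw [← mul_assoc, hQP]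
    rw [t1, t2, ← hPdef]
    calc d * Q + Q * d = (d * P) * (h * P) + (P * h) * (P * d) := by
          rw [hQdef]; noncomm_ring
    _ = (P * d) * (h * P) + (P * h) * (P * d) := by rw [hdP]
    _ = (P * (d * h)) * P + (P * h) * (P * d) := by noncomm_ring
    _ = (P * (d * h)) * P + (P * h) * (d * P) := by rw [← hdP]
    _ = P * (d * h + h * d) * P := by noncomm_ring
    _ = P := by rw [hh, ← hPdef, hPP, hPP]
  · have w : d * (Q * Q) * d = 0 := by
      have inner : d * h * P * (h * d) = P * (h * d) - h * (P * d) := by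
        calc d * h * P * (h * d) = (P - h * d) * P * (h * d) := by rw [hdh]
        _ = P * P * (h * d) - h * ((d * P) * h * d) := by noncomm_ring
        _ = P * (h * d) - h * ((P * d) * h * d) := by rw [hPP, hdP]
        _ = P * (h * d) - h * (P * (d * h * d)) := by noncomm_ring
        _ = P * (h * d) - h * (P * (P * d)) := by rw [hdhd]
        _ = P * (h * d) - h * (P * d) := by rw [← mul_assoc P P d, hPP]
      calc d * (Q * Q) * d
          = (d * P) * h * (P * P) * (h * (P * d)) := by rw [hQdef]; noncomm_ring
      _ = (P * d) * h * P * (h * (P * d)) := by rw [hdP, hPP]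
      _ = (P * d) * h * P * (h * (d * P)) := by nth_rewrite 2 [← hdP]; rfl
      _ = P * ((d * h * P * (h * d)) * P) := by noncomm_ring
      _ = P * ((P * (h * d) - h * (P * d)) * P) := by rw [inner]
      _ = (P * P) * (h * (d * P)) - P * (h * (P * (d * P))) := by noncomm_ring
      _ = P * (h * (P * d)) - P * (h * (P * d)) := by rw [hPP, hdP, ← mul_assoc P P d, hPP]
      _ = 0 := sub_self _
    calc H * H = Q * (d * (Q * Q) * d) * Q := by rw [hHdef]; noncomm_ring
    _ = 0 := by rw [w, mul_zero, zero_mul]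


/-- **Achieving the side conditions of a contraction** (Remark 2.1 of the paper).
Given chain maps `pr : N → M`, `nb : M → N` between differential `R`-modules and a
homotopy `h : N → N` with `pr ∘ nb = id` and `dN ∘ h + h ∘ dN = id − nb ∘ pr`
(the side conditions NOT being assumed), the operator
`h' = p ∘ h ∘ p ∘ dN ∘ p ∘ h ∘ p`, where `p = id − nb ∘ pr`, satisfies the
homotopy condition together with all three side conditions. -/
theorem contraction_side_conditions_achievable
    {R M N : Type*} [CommRing R]
    [AddCommGroup M] [Module R M] [AddCommGroup N] [Module R N]
    (dN : N →ₗ[R] N) (dM : M →ₗ[R] M)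
    (hdN : dN ∘ₗ dN = 0) (hdM : dM ∘ₗ dM = 0)
    (pr : N →ₗ[R] M) (nb : M →ₗ[R] N) (h : N →ₗ[R] N)
    (hpr : pr ∘ₗ dN = dM ∘ₗ pr) (hnb : dN ∘ₗ nb = nb ∘ₗ dM)
    (hretr : pr ∘ₗ nb = LinearMap.id)
    (hhtp : dN ∘ₗ h + h ∘ₗ dN = LinearMap.id - nb ∘ₗ pr) :
    let p : N →ₗ[R] N := LinearMap.id - nb ∘ₗ pr
    let h' : N →ₗ[R] N := p ∘ₗ h ∘ₗ p ∘ₗ dN ∘ₗ p ∘ₗ h ∘ₗ p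
    dN ∘ₗ h' + h' ∘ₗ dN = LinearMap.id - nb ∘ₗ pr ∧
      pr ∘ₗ h' = 0 ∧ h' ∘ₗ nb = 0 ∧ h' ∘ₗ h' = 0 := by
  intro p h'
  have hpdef : p = LinearMap.id - nb ∘ₗ pr := rfl
  have h'def : h' = p ∘ₗ h ∘ₗ p ∘ₗ dN ∘ₗ p ∘ₗ h ∘ₗ p := rfl
  have hr : ∀ m, pr (nb m) = m := fun m => DFunLike.congr_fun hretr m
  have hnb' : ∀ m, dN (nb m) = nb (dM m) := fun m => DFunLike.congr_fun hnb m
  have hpr' : ∀ x, pr (dN x) = dM (pr x) := fun x => DFunLike.congr_fun hpr x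
  have hd : dN * dN = 0 := hdN
  have he : (nb ∘ₗ pr) * (nb ∘ₗ pr) = nb ∘ₗ pr := by
    ext x; simp [Module.End.mul_apply, hr]
  have hde : dN * (nb ∘ₗ pr) = (nb ∘ₗ pr) * dN := by
    ext x
    simp only [Module.End.mul_apply, LinearMap.comp_apply]
    rw [hpr', hnb']
  have hh : dN * h + h * dN = 1 - nb ∘ₗ pr := hhtp
  obtain ⟨G1, G4⟩ := ring_aux dN h (nb ∘ₗ pr) hd he hde hh
  have hHeq : h' =
      ((1 - nb ∘ₗ pr) * h * (1 - nb ∘ₗ pr)) * dN *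
        ((1 - nb ∘ₗ pr) * h * (1 - nb ∘ₗ pr)) := by
    rw [h'def, hpdef]
    simp only [Module.End.mul_eq_comp]
    rfl
  refine ⟨?_, ?_, ?_, ?_⟩
  · rw [hHeq]; exact G1
  · ext x
    rw [h'def, hpdef]
    simp [hr]
  · ext m
    rw [h'def, hpdef]
    simp [hr]
  · rw [hHeq]; exact G4
end

section
/- Let R be a commutative ring in which 2 is invertible, let Y be an R-module, and let f : Y → Y ⊗_R Y be an R-linear map such that τ ∘ f = −f, where τ : Y ⊗_R Y → Y ⊗_R Y is the interchange map x ⊗ y ↦ y ⊗ x. Let m : Y ⊗_R Y → TensorAlgebra R Y be the R-linear map determined by x ⊗ y ↦ ι(x) · ι(y), where ι : Y → TensorAlgebra R Y is the canonical inclusion. Then for every y ∈ Y, the element m(f(y)) lies in the Lie subalgebra of TensorAlgebra R Y (under the commutator bracket [a, b] = a·b − b·a) generated by the image of ι, i.e. in the free Lie algebra L[Y] on Y inside the tensor algebra. -/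
open scoped TensorProduct

attribute [local instance] LieRing.ofAssociativeRing

/-- **Anti-symmetric maps into `Y ⊗ Y` land in the free Lie algebra** (core of
the unnamed Lemma in Section 2 of the paper): if `2` is invertible in `R` and
`f : Y → Y ⊗ Y` is an `R`-linear map with `τ ∘ f = −f` for the interchange map
`τ`, then for every `y`, the image under `x ⊗ y ↦ ι x * ι y` of `f y` lies in
the Lie subalgebra of the tensor algebra (under the commutator bracket)
generated by the image of `ι`, i.e. in the free Lie algebra `L[Y]` on `Y`. -/
theorem antiInvariant_values_in_freeLieAlgebra
    {R Y : Type*} [CommRing R] [AddCommGroup Y] [Module R Y]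
    (htwo : IsUnit (2 : R))
    (f : Y →ₗ[R] Y ⊗[R] Y)
    (hf : ∀ y : Y, TensorProduct.comm R Y Y (f y) = - f y)
    (m : Y ⊗[R] Y →ₗ[R] TensorAlgebra R Y)
    (hm : ∀ x y : Y, m (x ⊗ₜ[R] y) = TensorAlgebra.ι R x * TensorAlgebra.ι R y)
    (y : Y) :
    m (f y) ∈
      LieSubalgebra.lieSpan R (TensorAlgebra R Y) (Set.range (TensorAlgebra.ι R)) := by
  set L := LieSubalgebra.lieSpan R (TensorAlgebra R Y) (Set.range (TensorAlgebra.ι R))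
  -- the "antisymmetrized multiplication"
  set g : Y ⊗[R] Y →ₗ[R] TensorAlgebra R Y :=
    m - m ∘ₗ (TensorProduct.comm R Y Y).toLinearMap with hg
  have hgmem : ∀ t : Y ⊗[R] Y, g t ∈ L := by
    intro t
    induction t using TensorProduct.induction_on with
    | zero => simp only [map_zero]; exact L.zero_mem
    | tmul a b =>
        have : g (a ⊗ₜ[R] b) = ⁅TensorAlgebra.ι R a, TensorAlgebra.ι R b⁆ := by
          simp [hg, hm, Ring.lie_def]
        rw [this]
        exact L.lie_mem (LieSubalgebra.subset_lieSpan ⟨a, rfl⟩)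
          (LieSubalgebra.subset_lieSpan ⟨b, rfl⟩)
    | add a b ha hb => rw [map_add]; exact L.add_mem ha hb
  have key : g (f y) = (2 : R) • m (f y) := by
    simp [hg, hf y, two_smul]
  have := L.smul_mem (↑htwo.unit⁻¹ : R) (hgmem (f y))
  rw [key, smul_smul] at this
  have h1 : (↑htwo.unit⁻¹ : R) * 2 = 1 := by
    simpa using htwo.unit.inv_mul
  rwa [h1, one_smul] at this
end
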